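/- arXiv:2105.02675 — 2 statements merged into one kernel-verified Lean document; each statement's English description precedes it below -/
import Mathlib

section
/- In the MTD model, if all columns of the matrix Z^j are equal, then the conditional probability p(x_{ti} | x_{(t-1)1}, ..., x_{(t-1)p}) = z^0_{x_{ti}} + Σ_{l} Z^l_{x_{ti}, x_{(t-1)l}} does not depend on the value of x_{(t-1)j}; conversely, if the conditional probability is invariant to x_{(t-1)j} for all configurations of the other variables, then all columns of Z^j are equal. -/
/-- In the MTD model, with conditional probability
`p(a | b) = z⁰ a + ∑ l, Z l a (b l)`, the conditional probability is invariant to the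
value of the `j`-th lagged variable (for all configurations of the others) if and only if
all columns of `Z j` are equal, i.e. `x_j` is Granger non-causal for `x_i` iff the
columns of `Z j` coincide.  Each series has a positive number of categories. -/
theorem mtd_granger_noncausality_iff_columns_equal (p m : ℕ) (mj : Fin p → ℕ)
    (hmj : ∀ l, 0 < mj l)
    (z0 : Fin m → ℝ) (Z : ∀ j : Fin p, Matrix (Fin m) (Fin (mj j)) ℝ) (j : Fin p) :
    (∀ (a : Fin m) (b : ∀ l : Fin p, Fin (mj l)) (v : Fin (mj j)),
        z0 a + (∑ l, Z l a ((Function.update b j v) l)) = z0 a + ∑ l, Z l a (b l))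
      ↔ (∀ (a : Fin m) (c c' : Fin (mj j)), Z j a c = Z j a c') := by
  constructor
  · intro h a c c'
    set b : ∀ l : Fin p, Fin (mj l) := fun l => ⟨0, hmj l⟩ with hb
    have h1 := h a (Function.update b j c') c
    have key : ∀ (v : Fin (mj j)),
        ∑ l, Z l a ((Function.update b j v) l)
          = Z j a v + ∑ l ∈ Finset.univ.erase j, Z l a (b l) := by
      intro v
      rw [← Finset.add_sum_erase _ _ (Finset.mem_univ j)]
      congr 1
      · simp
      · exact Finset.sum_congr rfl fun l hl => by
          rw [Function.update_of_ne (Finset.ne_of_mem_erase hl)]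
    have h2 : ∑ l, Z l a ((Function.update (Function.update b j c') j c) l)
        = ∑ l, Z l a ((Function.update b j c) l) := by
      rw [Function.update_idem]
    rw [h2, key c, key c'] at h1
    have := add_left_cancel h1
    linarith [this]
  · intro h a b v
    congr 1
    refine Finset.sum_congr rfl fun l _ => ?_
    rcases eq_or_ne l j with rfl | hl
    · simp only [Function.update_self]
      exact h a v (b l)
    · rw [Function.update_of_ne hl]
end

section
/- In a component-wise LSTM model, if the j-th column of the stacked input weight matrix W^1 = ((W^f)^T, (W^in)^T, (W^o)^T, (W^c)^T)^T is zero, then for any input sequences x and x' differing only in the j-th coordinate at every time step, the induced hidden state sequences (c_t, h_t) are identical (given the same initialization), and hence the predicted output x_{ti} is identical; so series x_j does not Granger cause series x_i. -/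
/-- One step of the component-wise LSTM recursion:
`f_t = σ(Wf x + Uf h)`, `i_t = σ(Win x + Uin h)`, `o_t = σ(Wo x + Uo h)`,
`c_t = f_t ⊙ c + i_t ⊙ σ(Wc x + Uc h)`, `h_t = o_t ⊙ σ(c_t)`. -/
def lstmStep {p H : ℕ} (σ : ℝ → ℝ)
    (Wf Win Wo Wc : Matrix (Fin H) (Fin p) ℝ) (Uf Uin Uo Uc : Matrix (Fin H) (Fin H) ℝ)
    (x : Fin p → ℝ) (ch : (Fin H → ℝ) × (Fin H → ℝ)) : (Fin H → ℝ) × (Fin H → ℝ) :=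
  let f : Fin H → ℝ := fun a => σ (Wf.mulVec x a + Uf.mulVec ch.2 a)
  let i : Fin H → ℝ := fun a => σ (Win.mulVec x a + Uin.mulVec ch.2 a)
  let o : Fin H → ℝ := fun a => σ (Wo.mulVec x a + Uo.mulVec ch.2 a)
  let c : Fin H → ℝ := fun a => f a * ch.1 a + i a * σ (Wc.mulVec x a + Uc.mulVec ch.2 a)
  (c, fun a => o a * σ (c a))

/-- The LSTM state sequence `(c_t, h_t)` from initialization `init` driven by inputs `xs`. -/
def lstmSeq {p H : ℕ} (σ : ℝ → ℝ)
    (Wf Win Wo Wc : Matrix (Fin H) (Fin p) ℝ) (Uf Uin Uo Uc : Matrix (Fin H) (Fin H) ℝ)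
    (xs : ℕ → Fin p → ℝ) (init : (Fin H → ℝ) × (Fin H → ℝ)) : ℕ → (Fin H → ℝ) × (Fin H → ℝ)
  | 0 => init
  | t + 1 => lstmStep σ Wf Win Wo Wc Uf Uin Uo Uc (xs t)
      (lstmSeq σ Wf Win Wo Wc Uf Uin Uo Uc xs init t)

lemma mulVec_eq_of_col_zero {p H : ℕ} (W : Matrix (Fin H) (Fin p) ℝ) (j : Fin p)
    (hz : ∀ a, W a j = 0) (x x' : Fin p → ℝ)
    (hagree : ∀ l : Fin p, l ≠ j → x l = x' l) :
    W.mulVec x = W.mulVec x' := by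
  funext a
  simp only [Matrix.mulVec, dotProduct]
  refine Finset.sum_congr rfl fun l _ => ?_
  by_cases h : l = j
  · subst h; simp [hz a]
  · rw [hagree l h]

/-- Component-wise LSTM: if the `j`-th column of each input weight matrix
`Wf, Win, Wo, Wc` (the stacked matrix `W¹`) is zero, then for any two input sequences
differing only in coordinate `j` at every time step, the induced hidden state sequences
`(c_t, h_t)` coincide (given the same initialization), and hence the predicted output
`W² h_t` coincides; so series `x_j` does not Granger cause series `x_i`. -/
theorem clstm_zero_column_granger_noncausal (p H : ℕ) (σ : ℝ → ℝ)
    (Wf Win Wo Wc : Matrix (Fin H) (Fin p) ℝ) (Uf Uin Uo Uc : Matrix (Fin H) (Fin H) ℝ)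
    (W2 : Fin H → ℝ) (j : Fin p)
    (hzero : ∀ a : Fin H, Wf a j = 0 ∧ Win a j = 0 ∧ Wo a j = 0 ∧ Wc a j = 0)
    (xs xs' : ℕ → Fin p → ℝ)
    (hagree : ∀ (t : ℕ) (l : Fin p), l ≠ j → xs t l = xs' t l)
    (init : (Fin H → ℝ) × (Fin H → ℝ)) :
    ∀ t : ℕ,
      lstmSeq σ Wf Win Wo Wc Uf Uin Uo Uc xs init t
        = lstmSeq σ Wf Win Wo Wc Uf Uin Uo Uc xs' init t ∧
      (∑ a, W2 a * (lstmSeq σ Wf Win Wo Wc Uf Uin Uo Uc xs init t).2 a)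
        = ∑ a, W2 a * (lstmSeq σ Wf Win Wo Wc Uf Uin Uo Uc xs' init t).2 a := by
  intro t
  induction t with
  | zero => exact ⟨rfl, rfl⟩
  | succ t ih =>
    have hstep : lstmStep σ Wf Win Wo Wc Uf Uin Uo Uc (xs t)
        (lstmSeq σ Wf Win Wo Wc Uf Uin Uo Uc xs init t)
        = lstmStep σ Wf Win Wo Wc Uf Uin Uo Uc (xs' t)
        (lstmSeq σ Wf Win Wo Wc Uf Uin Uo Uc xs' init t) := by
      rw [← ih.1]
      unfold lstmStep
      rw [mulVec_eq_of_col_zero Wf j (fun a => (hzero a).1) (xs t) (xs' t) (hagree t),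
        mulVec_eq_of_col_zero Win j (fun a => (hzero a).2.1) (xs t) (xs' t) (hagree t),
        mulVec_eq_of_col_zero Wo j (fun a => (hzero a).2.2.1) (xs t) (xs' t) (hagree t),
        mulVec_eq_of_col_zero Wc j (fun a => (hzero a).2.2.2) (xs t) (xs' t) (hagree t)]
    have h1 : lstmSeq σ Wf Win Wo Wc Uf Uin Uo Uc xs init (t+1)
        = lstmSeq σ Wf Win Wo Wc Uf Uin Uo Uc xs' init (t+1) := by
      simp only [lstmSeq]; exact hstep
    exact ⟨h1, by rw [h1]⟩
end
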